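/- Let x be a random vector in ℝ^d whose coordinates are independent standard Gaussian random variables (mean 0, variance 1). Then for every δ ≥ 0: ℙ(‖x‖₂² ≥ d + δ) ≤ ((d + δ)/d)^{d/2} · exp(−δ/2). -/

import Mathlib

open MeasureTheory ProbabilityTheory
open scoped ENNReal NNReal

lemma my_iIndepFun_ae_congr {ι Ω : Type*} [MeasurableSpace Ω] {μ : Measure Ω}
    {β : ι → Type*} {m : ∀ i, MeasurableSpace (β i)} {f g : ∀ i, Ω → β i}
    (hf : iIndepFun f μ) (h : ∀ i, f i =ᵐ[μ] g i) : iIndepFun g μ := by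
  rw [iIndepFun_iff_measure_inter_preimage_eq_mul] at hf ⊢
  intro S sets h_meas
  have hae : ∀ i, g i ⁻¹' sets i =ᵐ[μ] f i ⁻¹' sets i := fun i =>
    Filter.eventuallyEq_set.2 ((h i).mono fun ω hω => by
      simp only [Set.mem_preimage, hω])
  have h1 : μ (⋂ i ∈ S, g i ⁻¹' sets i) = μ (⋂ i ∈ S, f i ⁻¹' sets i) := by
    apply measure_congr
    apply Filter.eventuallyEq_set.2
    have : ∀ᵐ ω ∂μ, ∀ i ∈ S, f i ω = g i ω :=
      (MeasureTheory.ae_ball_iff S.countable_toSet).2 fun i _ => h i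
    filter_upwards [this] with ω hω
    simp only [Set.mem_iInter, Set.mem_preimage]
    exact ⟨fun h' i hi => (hω i hi) ▸ h' i hi, fun h' i hi => (hω i hi).symm ▸ h' i hi⟩
  rw [h1, hf S h_meas]
  exact Finset.prod_congr rfl fun i hi => (measure_congr (hae i)).symm

lemma my_pdf_mul (t : ℝ) (y : ℝ) :
    gaussianPDFReal 0 1 y * Real.exp (t * y ^ 2)
      = (Real.sqrt (2 * Real.pi))⁻¹ * Real.exp (-(1/2 - t) * y ^ 2) := by
  simp only [gaussianPDFReal, NNReal.coe_one, mul_one, sub_zero, one_div]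
  rw [mul_assoc, ← Real.exp_add]
  ring_nf

lemma my_integrable {t : ℝ} (ht : t < 1/2) :
    Integrable (fun y => Real.exp (t * y ^ 2)) (gaussianReal 0 1) := by
  rw [gaussianReal_of_var_ne_zero 0 one_ne_zero]
  have hmeas : Measurable fun y => (gaussianPDFReal 0 1 y).toNNReal :=
    (measurable_gaussianPDFReal 0 1).real_toNNReal
  have : gaussianPDF 0 1 = fun y => ((gaussianPDFReal 0 1 y).toNNReal : ℝ≥0∞) := rfl
  rw [this, integrable_withDensity_iff_integrable_smul hmeas]
  have heq : (fun y => (gaussianPDFReal 0 1 y).toNNReal • Real.exp (t * y ^ 2))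
      = fun y => (Real.sqrt (2 * Real.pi))⁻¹ * Real.exp (-(1/2 - t) * y ^ 2) := by
    funext y
    rw [NNReal.smul_def, smul_eq_mul, Real.coe_toNNReal _ (gaussianPDFReal_nonneg 0 1 y),
      my_pdf_mul]
  rw [heq]
  exact (integrable_exp_neg_mul_sq (by linarith)).const_mul _

lemma my_integral {t : ℝ} (ht : t < 1/2) :
    ∫ y, Real.exp (t * y ^ 2) ∂(gaussianReal 0 1) = (Real.sqrt (1 - 2 * t))⁻¹ := by
  rw [gaussianReal_of_var_ne_zero 0 one_ne_zero]
  have hmeas : Measurable fun y => (gaussianPDFReal 0 1 y).toNNReal :=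
    (measurable_gaussianPDFReal 0 1).real_toNNReal
  have h0 : gaussianPDF 0 1 = fun y => ((gaussianPDFReal 0 1 y).toNNReal : ℝ≥0∞) := rfl
  rw [h0, integral_withDensity_eq_integral_smul hmeas]
  have heq : (fun y => (gaussianPDFReal 0 1 y).toNNReal • Real.exp (t * y ^ 2))
      = fun y => (Real.sqrt (2 * Real.pi))⁻¹ * Real.exp (-(1/2 - t) * y ^ 2) := by
    funext y
    rw [NNReal.smul_def, smul_eq_mul, Real.coe_toNNReal _ (gaussianPDFReal_nonneg 0 1 y),
      my_pdf_mul]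
  rw [heq, integral_const_mul, integral_gaussian]
  have hb : (0:ℝ) < 1/2 - t := by linarith
  have h2 : Real.pi / (1/2 - t) = (2 * Real.pi) / (1 - 2 * t) := by
    rw [div_eq_div_iff (by positivity) (by linarith)]; ring
  rw [h2, Real.sqrt_div (by positivity)]
  have hs : Real.sqrt (2 * Real.pi) ≠ 0 := by positivity
  field_simp

/-- for a standard Gaussian vector `x` in ℝ^d (independent `N(0,1)`
coordinates) and any `δ ≥ 0`:
`ℙ(‖x‖₂² ≥ d + δ) ≤ ((d + δ)/d)^{d/2} exp(−δ/2)`. -/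
theorem stmt12
    {Ω : Type*} [MeasurableSpace Ω] (P : Measure Ω) [IsProbabilityMeasure P]
    (d : ℕ) (x : Ω → Fin d → ℝ)
    (hind : iIndepFun (fun i ω => x ω i) P)
    (hgauss : ∀ i, Measure.map (fun ω => x ω i) P = gaussianReal 0 1)
    (δ : ℝ) (hδ : 0 ≤ δ) :
    P {ω | (d : ℝ) + δ ≤ ∑ i, (x ω i) ^ 2}
      ≤ ENNReal.ofReal ((((d : ℝ) + δ) / d) ^ ((d : ℝ) / 2) * Real.exp (-δ / 2)) := by
  rcases eq_or_lt_of_le hδ with hδ0 | hδpos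
  · -- δ = 0 : RHS = 1
    rw [← hδ0]
    have hrhs : (((d : ℝ) + 0) / d) ^ ((d : ℝ) / 2) * Real.exp (-0 / 2) = 1 := by
      rcases Nat.eq_zero_or_pos d with h | h
      · subst h; simp
      · rw [add_zero, div_self (by positivity), Real.one_rpow]; simp
    rw [hrhs, ENNReal.ofReal_one]
    exact prob_le_one
  rcases Nat.eq_zero_or_pos d with hd0 | hdpos
  · subst hd0
    have hempty : {ω | (((0:ℕ)):ℝ) + δ ≤ ∑ i : Fin 0, (x ω i) ^ 2} = (∅ : Set Ω) := by
      ext ω; simp [hδpos.not_ge]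
    rw [hempty]
    simp
  -- main case
  have hdR : (0:ℝ) < d := by exact_mod_cast hdpos
  have hdδ : (0:ℝ) < d + δ := by linarith
  set t : ℝ := δ / (2 * ((d:ℝ) + δ)) with ht_def
  have ht0 : 0 < t := by positivity
  have hthalf : t < 1/2 := by
    rw [ht_def, div_lt_iff₀ (by positivity)]
    nlinarith
  have h1 : 1 - 2 * t = (d:ℝ) / ((d:ℝ) + δ) := by
    rw [ht_def]; field_simp; ring
  -- a.e. measurable versions
  have haem : ∀ i, AEMeasurable (fun ω => x ω i) P := by
    intro i
    by_contra hc
    have h := (hgauss i).symm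
    rw [Measure.map_of_not_aemeasurable hc] at h
    exact (IsProbabilityMeasure.ne_zero _) h
  set g : Fin d → Ω → ℝ := fun i => (haem i).mk _ with hg_def
  have hgmeas : ∀ i, Measurable (g i) := fun i => (haem i).measurable_mk
  have hxg : ∀ i, (fun ω => x ω i) =ᵐ[P] g i := fun i => (haem i).ae_eq_mk
  have hindg : iIndepFun g P :=
    my_iIndepFun_ae_congr hind hxg
  have hmapg : ∀ i, Measure.map (g i) P = gaussianReal 0 1 := fun i => by
    rw [← Measure.map_congr (hxg i), hgauss i]
  set Y : Fin d → Ω → ℝ := fun i ω => g i ω ^ 2 with hY_def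
  have hYmeas : ∀ i, Measurable (Y i) := fun i => (hgmeas i).pow_const 2
  have hindY : iIndepFun Y P := by
    have := hindg.comp (fun _ => fun y : ℝ => y ^ 2) (fun _ => measurable_id.pow_const 2)
    exact this
  -- integrability of exp (t * Y i)
  have hYint : ∀ i, Integrable (fun ω => Real.exp (t * Y i ω)) P := by
    intro i
    have h : Integrable (fun y => Real.exp (t * y ^ 2)) (Measure.map (g i) P) := by
      rw [hmapg i]; exact my_integrable hthalf
    have hm : AEStronglyMeasurable (fun y : ℝ => Real.exp (t * y ^ 2)) (Measure.map (g i) P) :=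
      (Real.measurable_exp.comp ((measurable_id.pow_const 2).const_mul t)).aestronglyMeasurable
    exact (integrable_map_measure hm (hgmeas i).aemeasurable).mp h
  -- mgf of each coordinate
  have hmgf : ∀ i, mgf (Y i) P t = (Real.sqrt (1 - 2 * t))⁻¹ := by
    intro i
    have hm : AEStronglyMeasurable (fun y : ℝ => Real.exp (t * y ^ 2)) (Measure.map (g i) P) :=
      (Real.measurable_exp.comp ((measurable_id.pow_const 2).const_mul t)).aestronglyMeasurable
    have hthis := integral_map (hgmeas i).aemeasurable hm
    rw [hmapg i, my_integral hthalf] at hthis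
    rw [mgf]
    exact hthis.symm
  have hmgfsum : mgf (∑ i, Y i) P t = ((Real.sqrt (1 - 2 * t))⁻¹) ^ d := by
    rw [hindY.mgf_sum hYmeas Finset.univ]
    simp [hmgf, Finset.prod_const, Finset.card_univ]
  have hint_sum : Integrable (fun ω => Real.exp (t * (∑ i, Y i) ω)) P :=
    hindY.integrable_exp_mul_sum hYmeas (fun i _ => hYint i)
  have hcher := measure_ge_le_exp_mul_mgf ((d : ℝ) + δ) ht0.le hint_sum
  have hsets : P {ω | (d : ℝ) + δ ≤ ∑ i, (x ω i) ^ 2}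
      = P {ω | (d : ℝ) + δ ≤ (∑ i, Y i) ω} := by
    apply measure_congr
    apply Filter.eventuallyEq_set.2
    have hall : ∀ᵐ ω ∂P, ∀ i, x ω i = g i ω := ae_all_iff.2 fun i => hxg i
    filter_upwards [hall] with ω hω
    have hsum : ∑ i, (x ω i) ^ 2 = (∑ i, Y i) ω := by
      rw [Finset.sum_apply]
      exact Finset.sum_congr rfl fun i _ => by rw [hω i]
    simp only [Set.mem_setOf_eq, hsum]
  rw [hsets, ← ENNReal.ofReal_toReal (measure_ne_top P _)]
  apply ENNReal.ofReal_le_ofReal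
  refine hcher.trans_eq ?_
  rw [hmgfsum]
  have e1 : -t * ((d : ℝ) + δ) = -δ / 2 := by
    rw [ht_def]; field_simp
  have e2 : (Real.sqrt (1 - 2 * t))⁻¹ = Real.sqrt (((d : ℝ) + δ) / d) := by
    rw [h1, ← Real.sqrt_inv, inv_div]
  have e3 : (Real.sqrt (((d : ℝ) + δ) / d)) ^ d = (((d : ℝ) + δ) / d) ^ ((d : ℝ) / 2) := by
    have hr : (0:ℝ) ≤ ((d : ℝ) + δ) / d := by positivity
    rw [Real.sqrt_eq_rpow, ← Real.rpow_natCast (_ ^ (1/2 : ℝ)) d, ← Real.rpow_mul hr]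
    congr 1
    ring
  rw [e1, e2, e3, mul_comm]
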